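/- Let p ≥ 1 and q ≥ 0 be integers and m ≥ 1 an integer. Then Σ_{n=1}^∞ H_n^{(p,q)} / ((n+m)·C(n+m+q, q)) = (−1)^{p−1} · H_m / m^p + Σ_{i=1}^{p−1} (−1)^{i−1} · ζ(p+1−i) / m^i; in particular the value of the series does not depend on q. -/

import Mathlib

open Finset Real

/-- The generalized harmonic number `H_n^{(p)} = ∑_{k=1}^n 1/k^p`. -/
noncomputable def gH (p : ℤ) (n : ℕ) : ℝ := ∑ k ∈ Finset.Icc 1 n, ((k : ℝ) ^ p)⁻¹

/-- The generalized hyperharmonic number `H_n^{(p,q)}`: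
`H_n^{(p,0)} = 1/n^p` (with `H_0^{(p,q)} = 0`) and
`H_n^{(p,q)} = ∑_{k=1}^n H_k^{(p,q-1)}` for `q ≥ 1`. -/
noncomputable def gHH (p : ℤ) : ℕ → ℕ → ℝ
  | 0, n => if n = 0 then 0 else ((n : ℝ) ^ p)⁻¹
  | q + 1, n => ∑ k ∈ Finset.Icc 1 n, gHH p q k

/-- Euler sum of generalized harmonic numbers `ζ_{H^{(p)}}(r) = ∑_{n≥1} H_n^{(p)}/n^r`. -/
noncomputable def eulerSum (p r : ℤ) : ℝ := ∑' n : ℕ+, gH p n / (n : ℝ) ^ r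

/-- Euler sum of generalized hyperharmonic numbers
`ζ_{H^{(p,q)}}(r) = ∑_{n≥1} H_n^{(p,q)}/n^r`. -/
noncomputable def eulerSumHH (p : ℤ) (q : ℕ) (r : ℤ) : ℝ := ∑' n : ℕ+, gHH p q n / (n : ℝ) ^ r

/-- Riemann zeta value at an integer argument, `ζ(s) = ∑_{n≥1} 1/n^s`. -/
noncomputable def zv (s : ℤ) : ℝ := ∑' n : ℕ+, ((n : ℝ) ^ s)⁻¹

/-- Unsigned Stirling numbers of the first kind, defined by
`x(x+1)⋯(x+q-1) = ∑_{k=0}^q [q,k] x^k`, i.e. `[n+1,k] = [n,k-1] + n·[n,k]`. -/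
def stirlingFirst : ℕ → ℕ → ℕ
  | 0, 0 => 1
  | 0, _ + 1 => 0
  | _ + 1, 0 => 0
  | n + 1, k + 1 => stirlingFirst n k + n * stirlingFirst n (k + 1)

/-- The series `μ(r,j) = ∑_{n≥1} 1/(n^r (n+j))`. -/
noncomputable def mu (r j : ℕ) : ℝ := ∑' n : ℕ+, 1 / ((n : ℝ) ^ r * ((n : ℝ) + j))

/-- `e_j(n+1, n+2, …, n+q)`: the `j`-th elementary symmetric polynomial
evaluated at the numbers `n+1, …, n+q`. -/
noncomputable def esymmVal (n q j : ℕ) : ℝ :=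
  ∑ s ∈ Finset.powersetCard j (Finset.Icc 1 q), ∏ i ∈ s, ((n : ℝ) + i)

noncomputable def WW (m q n : ℕ) : ℝ := (((n + m) * (n + m + q).choose q : ℕ) : ℝ)⁻¹

lemma gHH_nonneg (p : ℤ) : ∀ q n, 0 ≤ gHH p q n
  | 0, n => by rw [gHH]; split <;> positivity
  | q+1, n => by rw [gHH]; exact Finset.sum_nonneg fun k _ => gHH_nonneg p q k

lemma gHH_zero (p : ℤ) (q : ℕ) : gHH p q 0 = 0 := by
  cases q <;> simp [gHH]

lemma gHH_succ (p : ℤ) (q n : ℕ) : gHH p (q+1) n = ∑ k ∈ Finset.Icc 1 n, gHH p q k := by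
  rw [gHH]

lemma WW_nonneg (m q n : ℕ) : 0 ≤ WW m q n := by unfold WW; positivity

lemma WW_le (m q n : ℕ) : WW m q n ≤ (((n + m) : ℕ) : ℝ)⁻¹ := by
  unfold WW
  have h1 : 0 < (n + m + q).choose q := Nat.choose_pos (by omega)
  have h2 : (n + m : ℕ) ≤ ((n + m) * (n + m + q).choose q : ℕ) := by
    calc (n+m) = (n+m) * 1 := by ring
    _ ≤ _ := Nat.mul_le_mul_left _ h1
  rcases Nat.eq_zero_or_pos (n + m) with h | h
  · simp [h]
  · exact inv_anti₀ (by exact_mod_cast h) (by exact_mod_cast h2)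

lemma WW_tele (m q n : ℕ) (hm : 1 ≤ m) : WW m (q+1) n = WW m q n - WW m q (n+1) := by
  have h1 : (n + m + q).choose (q+1) * (q+1) = (n + m + q).choose q * (n + m) := by
    have := Nat.choose_succ_right_eq (n + m + q) q
    rwa [Nat.add_sub_cancel] at this
  have h2 : (n + m + q + 1).choose (q+1) * (q+1) = (n + m + q + 1).choose q * (n + 1 + m) := by
    have := Nat.choose_succ_right_eq (n + m + q + 1) q
    rwa [show n + m + q + 1 - q = n + 1 + m by omega] at this
  have hpas : (n + m + q + 1).choose (q+1) = (n + m + q).choose q + (n + m + q).choose (q+1) :=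
    Nat.choose_succ_succ _ _
  have ha : (0:ℝ) < ((n + m + q).choose q : ℝ) := by
    exact_mod_cast Nat.choose_pos (by omega)
  have hb : (0:ℝ) < ((n + m + q).choose (q+1) : ℝ) := by
    exact_mod_cast Nat.choose_pos (by omega)
  have hc : (0:ℝ) < ((n + m + q + 1).choose q : ℝ) := by
    exact_mod_cast Nat.choose_pos (by omega)
  have hd : (0:ℝ) < ((n + m + q + 1).choose (q+1) : ℝ) := by
    exact_mod_cast Nat.choose_pos (by omega)
  have hnm : (0:ℝ) < ((n + m : ℕ) : ℝ) := by exact_mod_cast Nat.lt_of_lt_of_le hm (by omega)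
  have h1' : ((n + m + q).choose (q+1) : ℝ) * (q+1) = ((n + m + q).choose q : ℝ) * (n + m) := by
    exact_mod_cast h1
  have h2' : ((n + m + q + 1).choose (q+1) : ℝ) * (q+1)
      = ((n + m + q + 1).choose q : ℝ) * (n + 1 + m) := by exact_mod_cast h2
  have hpas' : ((n + m + q + 1).choose (q+1) : ℝ)
      = ((n + m + q).choose q : ℝ) + ((n + m + q).choose (q+1) : ℝ) := by exact_mod_cast hpas
  unfold WW
  rw [show n + m + (q+1) = n + m + q + 1 by omega, show n + 1 + m + q = n + m + q + 1 by omega]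
  push_cast
  set A := ((n + m + q).choose q : ℝ)
  set B := ((n + m + q).choose (q+1) : ℝ)
  set C := ((n + m + q + 1).choose q : ℝ)
  set D := ((n + m + q + 1).choose (q+1) : ℝ)
  have hA := ha.ne'
  have hC := hc.ne'
  have hD := hd.ne'
  have hM : ((n:ℝ) + m) ≠ 0 := by push_cast at hnm; exact hnm.ne'
  have hM1 : ((n:ℝ) + 1 + m) ≠ 0 := by positivity
  field_simp
  linear_combination B * h2' - ((n:ℝ)+1+m)*C * hpas' - D * h1'

lemma WW_tendsto (m q k : ℕ) (hm : 1 ≤ m) :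
    Filter.Tendsto (fun N : ℕ => WW m q (k + N)) Filter.atTop (nhds 0) := by
  apply squeeze_zero (fun N => WW_nonneg m q (k + N)) (fun N => ?_)
  · exact tendsto_one_div_add_atTop_nhds_zero_nat
  · calc WW m q (k + N) ≤ (((k + N + m) : ℕ) : ℝ)⁻¹ := WW_le m q (k + N)
      _ ≤ 1 / ((N : ℝ) + 1) := by
          rw [one_div]
          apply inv_anti₀ (by positivity)
          have : ((N + 1 : ℕ) : ℝ) ≤ ((k + N + m : ℕ) : ℝ) := Nat.cast_le.2 (by omega)
          push_cast at this ⊢; linarith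

lemma WW_tail (m q k : ℕ) (hm : 1 ≤ m) :
    HasSum (fun j : ℕ => WW m (q+1) (k + j)) (WW m q k) := by
  rw [hasSum_iff_tendsto_nat_of_nonneg (fun i => WW_nonneg _ _ _)]
  have hps : ∀ N, ∑ j ∈ Finset.range N, WW m (q+1) (k + j) = WW m q k - WW m q (k + N) := by
    intro N
    have h := Finset.sum_range_sub' (fun j => WW m q (k + j)) N
    rw [show WW m q k = WW m q (k + 0) by rw [Nat.add_zero], ← h]
    apply Finset.sum_congr rfl
    intro j _
    rw [WW_tele m q (k + j) hm, show k + j + 1 = k + (j + 1) by omega]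
  simp only [hps]
  simpa using (tendsto_const_nhds.sub (WW_tendsto m q k hm))

open ENNReal in
lemma E_step (p : ℤ) (q m : ℕ) (hm : 1 ≤ m) :
    ∑' n : ℕ, ENNReal.ofReal (gHH p (q+1) n * WW m (q+1) n)
      = ∑' n : ℕ, ENNReal.ofReal (gHH p q n * WW m q n) := by
  have key : ∀ n : ℕ, ENNReal.ofReal (gHH p (q+1) n * WW m (q+1) n)
      = ∑' k : ℕ, (if 1 ≤ k ∧ k ≤ n then ENNReal.ofReal (gHH p q k * WW m (q+1) n) else 0) := by
    intro n
    rw [tsum_eq_sum (s := Finset.Icc 1 n)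
      (fun b hb => if_neg (by simpa [Finset.mem_Icc] using hb))]
    rw [gHH_succ, Finset.sum_mul, ENNReal.ofReal_sum_of_nonneg
      (fun k _ => mul_nonneg (gHH_nonneg p q k) (WW_nonneg _ _ _))]
    exact Finset.sum_congr rfl fun k hk => (if_pos (Finset.mem_Icc.mp hk)).symm
  simp_rw [key]
  rw [ENNReal.tsum_comm]
  apply tsum_congr
  intro k
  rcases Nat.eq_zero_or_pos k with hk | hk
  · simp [hk, gHH_zero]
  · have hinj : Function.Injective (fun j : ℕ => k + j) := fun a b h => by simpa using h
    rw [← Function.Injective.tsum_eq hinj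
      (f := fun n => if 1 ≤ k ∧ k ≤ n then ENNReal.ofReal (gHH p q k * WW m (q+1) n) else 0)
      (by
        intro x hx
        rw [Function.mem_support] at hx
        by_cases hle : k ≤ x
        · exact ⟨x - k, show k + (x - k) = x by omega⟩
        · exact absurd (if_neg (by omega)) hx)]
    have : ∀ j : ℕ, (if 1 ≤ k ∧ k ≤ k + j then ENNReal.ofReal (gHH p q k * WW m (q+1) (k+j)) else 0)
        = ENNReal.ofReal (gHH p q k * WW m (q+1) (k+j)) := fun j => if_pos ⟨hk, by omega⟩
    simp_rw [this]
    rw [← ENNReal.ofReal_tsum_of_nonneg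
      (fun j => mul_nonneg (gHH_nonneg p q k) (WW_nonneg _ _ _))
      ((WW_tail m q k hm).mul_left _).summable,
      ((WW_tail m q k hm).mul_left _).tsum_eq]

lemma gH_succ (N : ℕ) : gH 1 (N + 1) = gH 1 N + ((N : ℝ) + 1)⁻¹ := by
  unfold gH
  rw [Finset.sum_Icc_succ_top (Nat.succ_le_succ (Nat.zero_le N))]
  push_cast
  norm_num

lemma gH_zero : gH 1 0 = 0 := by simp [gH]

lemma gH_diff (m N : ℕ) :
    0 ≤ gH 1 (N + m) - gH 1 N ∧ gH 1 (N + m) - gH 1 N ≤ m * ((N : ℝ) + 1)⁻¹ := by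
  have hsplit : gH 1 (N + m) - gH 1 N = ∑ k ∈ Finset.Ioc N (N + m), ((k : ℝ))⁻¹ := by
    unfold gH
    have h0 : ∀ M : ℕ, Finset.Icc 1 M = Finset.Ioc 0 M := fun M => rfl
    rw [h0, h0, ← Finset.sum_Ioc_consecutive _ (Nat.zero_le N) (Nat.le_add_right N m)]
    simp [zpow_one]
  constructor
  · rw [hsplit]; exact Finset.sum_nonneg fun k _ => by positivity
  · rw [hsplit]
    calc ∑ k ∈ Finset.Ioc N (N + m), ((k : ℝ))⁻¹
        ≤ (Finset.Ioc N (N + m)).card • ((N : ℝ) + 1)⁻¹ := by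
          apply Finset.sum_le_card_nsmul
          intro k hk
          rw [Finset.mem_Ioc] at hk
          apply inv_anti₀ (by positivity)
          have : (N + 1 : ℝ) ≤ (k : ℝ) := by exact_mod_cast hk.1
          linarith
      _ = m * ((N : ℝ) + 1)⁻¹ := by
          rw [Nat.card_Ioc, nsmul_eq_mul]
          congr 1
          simp

lemma psum_one (m : ℕ) (hm : 1 ≤ m) (N : ℕ) :
    ∑ j ∈ Finset.range N, ((j : ℝ) + 1)⁻¹ * (((j : ℝ) + 1) + m)⁻¹
      = (gH 1 m - (gH 1 (N + m) - gH 1 N)) / m := by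
  induction N with
  | zero => simp [gH_zero]
  | succ N ih =>
      rw [Finset.sum_range_succ, ih]
      have h1 : gH 1 (N + 1) = gH 1 N + ((N : ℝ) + 1)⁻¹ := gH_succ N
      have h2 : gH 1 (N + 1 + m) = gH 1 (N + m) + ((N : ℝ) + 1 + m)⁻¹ := by
        rw [show N + 1 + m = (N + m) + 1 by omega, gH_succ]
        push_cast; ring_nf
      rw [h1, h2]
      have hm' : (0:ℝ) < m := by exact_mod_cast hm
      have hN1 : (0:ℝ) < (N : ℝ) + 1 := by positivity
      have hN1m : (0:ℝ) < (N : ℝ) + 1 + m := by positivity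
      field_simp
      ring

lemma base_one (m : ℕ) (hm : 1 ≤ m) :
    HasSum (fun n : ℕ+ => ((n : ℝ))⁻¹ * ((n : ℝ) + m)⁻¹) (gH 1 m / m) := by
  have hN : HasSum (fun j : ℕ => ((j : ℝ) + 1)⁻¹ * (((j : ℝ) + 1) + m)⁻¹) (gH 1 m / m) := by
    rw [hasSum_iff_tendsto_nat_of_nonneg (fun i => by positivity)]
    have hps := psum_one m hm
    simp only [hps]
    have h0 : Filter.Tendsto (fun N : ℕ => gH 1 (N + m) - gH 1 N) Filter.atTop (nhds 0) :=
      squeeze_zero (fun N => (gH_diff m N).1) (fun N => (gH_diff m N).2)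
        (by simpa [one_div] using tendsto_one_div_add_atTop_nhds_zero_nat.const_mul (m : ℝ))
    simpa using (tendsto_const_nhds.sub h0).div_const (m : ℝ)
  apply (Equiv.pnatEquivNat.symm.hasSum_iff
    (f := fun n : ℕ+ => ((n : ℝ))⁻¹ * ((n : ℝ) + m)⁻¹) (a := gH 1 m / m)).mp
  · apply hN.congr_fun
    intro j
    have : ((Equiv.pnatEquivNat.symm j : ℕ+) : ℕ) = j + 1 := by
      simp [Equiv.pnatEquivNat]
    simp only [Function.comp_apply, this]
    push_cast
    ring_nf

lemma zv_hasSum (s : ℕ) (hs : 2 ≤ s) :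
    HasSum (fun n : ℕ+ => ((n : ℝ) ^ (s : ℤ))⁻¹) (zv s) := by
  have h1 : Summable (fun n : ℕ => 1 / (n : ℝ) ^ s) := Real.summable_one_div_nat_pow.mpr hs
  have h2 : Summable ((fun n : ℕ => 1 / (n : ℝ) ^ s) ∘ ((↑) : ℕ+ → ℕ)) :=
    h1.comp_injective PNat.coe_injective
  have h3 : Summable (fun n : ℕ+ => ((n : ℝ) ^ (s : ℤ))⁻¹) := by
    apply h2.congr
    intro n
    simp [Function.comp, one_div, zpow_natCast]
  exact h3.hasSum

lemma val_alg (m p : ℕ) (hm : 1 ≤ m) (hp : 1 ≤ p) :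
    (m:ℝ)⁻¹ * (zv (((p:ℕ)+1 : ℕ) : ℤ)
      - ((-1:ℝ)^(p-1) * gH 1 m / (m:ℝ)^p
          + ∑ i ∈ Finset.Icc 1 (p-1), (-1:ℝ)^(i-1) * zv ((p:ℤ)+1-i) / (m:ℝ)^i))
    = (-1:ℝ)^(p+1-1) * gH 1 m / (m:ℝ)^(p+1)
      + ∑ i ∈ Finset.Icc 1 (p+1-1), (-1:ℝ)^(i-1) * zv (((p+1:ℕ):ℤ)+1-i) / (m:ℝ)^i := by
  have hm' : (0:ℝ) < m := by exact_mod_cast hm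
  have hsplit : ∑ i ∈ Finset.Icc 1 (p+1-1), (-1:ℝ)^(i-1) * zv (((p+1:ℕ):ℤ)+1-i) / (m:ℝ)^i
      = zv (((p:ℕ)+1 : ℕ) : ℤ) / m
        + (∑ i ∈ Finset.Icc 1 (p-1), (-1:ℝ)^(i-1) * zv ((p:ℤ)+1-i) / (m:ℝ)^i) * ((-1)/m) := by
    rw [show p+1-1 = p from rfl, ← Finset.Ioc_insert_left hp, Finset.sum_insert (by simp)]
    congr 1
    · have e1 : zv (((p+1:ℕ):ℤ)+1-(1:ℕ)) = zv (((p:ℕ)+1 : ℕ) : ℤ) := congrArg zv (by push_cast; ring)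
      rw [e1]
      norm_num
    · have hmap : Finset.Ioc 1 p = (Finset.Icc 1 (p-1)).map (addRightEmbedding 1) := by
        rw [Finset.map_add_right_Icc]
        rw [show p - 1 + 1 = p by omega]
        rfl
      rw [hmap, Finset.sum_map, Finset.sum_mul]
      apply Finset.sum_congr rfl
      intro i hi
      have hi1 : 1 ≤ i := (Finset.mem_Icc.mp hi).1
      simp only [addRightEmbedding_apply]
      have e1 : zv (((p+1:ℕ):ℤ)+1-((i+1:ℕ):ℤ)) = zv ((p:ℤ)+1-i) := congrArg zv (by push_cast; ring)
      have e2 : (-1:ℝ)^i = (-1)^(i-1) * (-1) := by rw [← pow_succ, Nat.sub_add_cancel hi1]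
      rw [show i+1-1 = i from rfl]
      push_cast [e1]
      rw [e2, pow_succ]
      field_simp
      rw [show (p:ℤ)+1+1-((i:ℤ)+1) = (p:ℤ)+1-i by ring]
  rw [hsplit, show p+1-1 = p from rfl]
  have e3 : (-1:ℝ)^p = (-1)^(p-1) * (-1) := by rw [← pow_succ, Nat.sub_add_cancel hp]
  rw [e3, pow_succ]
  field_simp
  ring

lemma base_all (m : ℕ) (hm : 1 ≤ m) (p : ℕ) (hp : 1 ≤ p) :
    HasSum (fun n : ℕ+ => ((n : ℝ) ^ (p : ℤ))⁻¹ * ((n : ℝ) + m)⁻¹)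
      ((-1 : ℝ) ^ (p - 1) * gH 1 m / (m : ℝ) ^ p
        + ∑ i ∈ Finset.Icc 1 (p - 1), (-1 : ℝ) ^ (i - 1) * zv ((p : ℤ) + 1 - i) / (m : ℝ) ^ i) := by
  induction p, hp using Nat.le_induction with
  | base => simpa using base_one m hm
  | succ p hp ih =>
      have hZ := zv_hasSum (p+1) (by omega)
      have combined := (hZ.sub ih).mul_left ((m:ℝ)⁻¹)
      rw [val_alg m p hm hp] at combined
      apply combined.congr_fun
      intro n
      have hn : (0:ℝ) < (n:ℝ) := by exact_mod_cast n.pos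
      have hm' : (0:ℝ) < (m:ℝ) := by exact_mod_cast hm
      have hz : ((n:ℝ) ^ (((p+1:ℕ)) : ℤ)) = (n:ℝ) ^ ((p:ℕ) : ℤ) * n := by
        rw [show (((p+1:ℕ)) : ℤ) = ((p:ℕ):ℤ) + 1 by push_cast; ring, zpow_add_one₀ hn.ne']
      rw [hz]
      have hnp : (0:ℝ) < (n:ℝ) ^ ((p:ℕ) : ℤ) := zpow_pos hn _
      field_simp
      ring


/-- The case `l = q`: the value of the series does not depend on `q`. -/
theorem stmt_6 (p q m : ℕ) (hp : 1 ≤ p) (hm : 1 ≤ m) :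
    ∑' n : ℕ+, gHH p q n / (((n : ℝ) + m) * ((((n : ℕ) + m + q).choose q : ℕ) : ℝ))
      = (-1 : ℝ) ^ (p - 1) * gH 1 m / (m : ℝ) ^ p
        + ∑ i ∈ Finset.Icc 1 (p - 1),
            (-1 : ℝ) ^ (i - 1) * zv ((p : ℤ) + 1 - i) / (m : ℝ) ^ i := by

  set R : ℝ := (-1 : ℝ) ^ (p - 1) * gH 1 m / (m : ℝ) ^ p
        + ∑ i ∈ Finset.Icc 1 (p - 1),
            (-1 : ℝ) ^ (i - 1) * zv ((p : ℤ) + 1 - i) / (m : ℝ) ^ i with hR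
  set f : ℕ → ℕ → ℝ := fun Q n => gHH p Q n * WW m Q n with hf
  have hnn : ∀ Q n, 0 ≤ f Q n := fun Q n => mul_nonneg (gHH_nonneg _ _ _) (WW_nonneg _ _ _)
  have hsupp : ∀ Q : ℕ, Function.support (f Q) ⊆ Set.range ((↑) : ℕ+ → ℕ) := by
    intro Q x hx
    rcases Nat.eq_zero_or_pos x with h | h
    · exfalso; apply hx; simp [hf, h, gHH_zero]
    · exact ⟨⟨x, h⟩, rfl⟩
  -- step 1 : LHS = ℕ-sum
  have hL : (∑' n : ℕ+, gHH p q n / (((n : ℝ) + m) * ((((n : ℕ) + m + q).choose q : ℕ) : ℝ)))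
      = ∑' n : ℕ, f q n := by
    rw [← Function.Injective.tsum_eq PNat.coe_injective (hsupp q)]
    apply tsum_congr
    intro b
    show gHH p q b / _ = gHH (p : ℤ) q (b : ℕ) * WW m q (b : ℕ)
    rw [div_eq_mul_inv]
    congr 1
    unfold WW
    push_cast
    ring_nf
  -- step 2 : base HasSum for f 0
  have hS0 : HasSum (f 0) R := by
    rw [← Function.Injective.hasSum_iff PNat.coe_injective (fun x hx => by
      by_contra hne
      exact hx (hsupp 0 hne))]
    apply (base_all m hm p hp).congr_fun
    intro n
    show f 0 (n : ℕ) = _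
    have hn1 : ((n : ℕ) : ℝ) = (n : ℝ) := rfl
    simp only [hf, gHH, WW]
    rw [if_neg (by exact_mod_cast n.pos.ne')]
    rw [Nat.add_zero, Nat.choose_zero_right, Nat.mul_one]
    push_cast
    ring_nf
  -- step 3 : ENNReal chain
  have hE : ∀ Q, (∑' n : ℕ, ENNReal.ofReal (f Q n)) = ∑' n : ℕ, ENNReal.ofReal (f 0 n) := by
    intro Q
    induction Q with
    | zero => rfl
    | succ Q ih => rw [← ih]; exact E_step p Q m hm
  have hE0 : (∑' n : ℕ, ENNReal.ofReal (f 0 n)) = ENNReal.ofReal R := by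
    rw [← ENNReal.ofReal_tsum_of_nonneg (hnn 0) hS0.summable, hS0.tsum_eq]
  have hfin : (∑' n : ℕ, ENNReal.ofReal (f q n)) ≠ ⊤ := by
    rw [hE q, hE0]; exact ENNReal.ofReal_ne_top
  have hsq : Summable (f q) := by
    have h := ENNReal.summable_toReal hfin
    apply h.congr
    intro n
    rw [ENNReal.toReal_ofReal (hnn q n)]
  have hOf : ENNReal.ofReal (∑' n : ℕ, f q n) = ENNReal.ofReal R := by
    rw [ENNReal.ofReal_tsum_of_nonneg (hnn q) hsq, hE q, hE0]
  have hRnn : 0 ≤ R := hS0.tsum_eq ▸ tsum_nonneg (hnn 0)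
  have hfinal : (∑' n : ℕ, f q n) = R :=
    (ENNReal.ofReal_eq_ofReal_iff (tsum_nonneg (hnn q)) hRnn).mp hOf
  rw [hL, hfinal]
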